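/- Let L be a Lie ring and a, a_1,…,a_n ∈ L. Then [a,[a_1,…,a_n]] = ∑_{i=0}^{n-1} ∑_{(α,β)∈Sh¹(n−i,i)} (−1)^i · [a, a_{β(i)},…,a_{β(1)}, a_{α(1)},…,a_{α(n−i)}], where the inner brackets on the right-hand side are left-normed. -/

import Mathlib

/-- The left-normed Lie bracket `[a₁,…,aₘ]` of a list of elements of a Lie ring,
defined by `[a₁] = a₁` and `[a₁,…,aₘ] = [[a₁,…,a_{m-1}], aₘ]` (and `0` for the empty list). -/
def lieWord {L : Type*} [LieRing L] : List L → L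
  | [] => 0
  | x :: xs => xs.foldl (fun a b => ⁅a, b⁆) x

/-- An `(s,t)`-shuffle `(α,β)` with `α(1) = 1`: a pair of strictly increasing maps
`α : {1,…,s} → {1,…,s+t}`, `β : {1,…,t} → {1,…,s+t}` with disjoint images and `α(1) = 1`
(everything 0-indexed, so the last condition reads `α 0 = 0`).  This is the set `Sh¹(s,t)`. -/
structure Shuffle1 (s t : ℕ) where
  α : Fin s → Fin (s + t)
  β : Fin t → Fin (s + t)
  mono_alpha : StrictMono α
  mono_beta : StrictMono β
  disj : ∀ i j, α i ≠ β j
  first : ∀ hs : 0 < s, α ⟨0, hs⟩ = ⟨0, Nat.lt_of_lt_of_le hs (Nat.le_add_right s t)⟩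

namespace ShuffleAux

lemma ext' {s t : ℕ} {x y : Shuffle1 s t} (hα : x.α = y.α) (hβ : x.β = y.β) :
    x = y := by
  cases x; cases y; cases hα; cases hβ; rfl

instance {s t : ℕ} : Finite (Shuffle1 s t) :=
  Finite.of_injective (fun sh => (sh.α, sh.β)) (by
    intro x y h
    exact ext' (congrArg Prod.fst h) (congrArg Prod.snd h))

noncomputable instance {s t : ℕ} : Fintype (Shuffle1 s t) := Fintype.ofFinite _

lemma strictMono_le_val {p q : ℕ} (f : Fin p → Fin q) (hf : StrictMono f) :
    ∀ k (h : k < p), k ≤ (f ⟨k, h⟩ : ℕ) := by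
  intro k
  induction k with
  | zero => exact fun _ => Nat.zero_le _
  | succ k ih =>
    intro h
    have h1 : f ⟨k, by omega⟩ < f ⟨k + 1, h⟩ := hf (by simp [Fin.lt_def])
    have h2 := ih (by omega)
    have h3 := Fin.lt_def.mp h1
    omega

lemma strictMono_fin_id {p : ℕ} (f : Fin p → Fin p) (hf : StrictMono f) (j : Fin p) :
    f j = j := by
  have h1 : (j : ℕ) ≤ (f j : ℕ) := by
    have := strictMono_le_val f hf (j : ℕ) j.isLt
    simpa using this
  have h2 : (f j : ℕ) ≤ (j : ℕ) := by
    have hgm : StrictMono (fun x : Fin p => (f x.rev).rev) := by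
      intro x y hxy
      exact Fin.rev_lt_rev.mpr (hf (Fin.rev_lt_rev.mpr hxy))
    have h6 := strictMono_le_val _ hgm (j.rev : ℕ) j.rev.isLt
    have h7 : (⟨(j.rev : ℕ), j.rev.isLt⟩ : Fin p) = j.rev := Fin.ext rfl
    rw [h7] at h6
    simp only [Fin.rev_rev, Fin.val_rev] at h6
    have h9 := j.isLt
    have h10 := (f j).isLt
    omega
  exact Fin.ext (le_antisymm h2 h1)

instance uniqueShuffle0 {s : ℕ} : Unique (Shuffle1 s 0) where
  default :=
    { α := fun j => ⟨(j : ℕ), by omega⟩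
      β := Fin.elim0
      mono_alpha := by
        intro i j hij
        exact Fin.mk_lt_mk.mpr hij
      mono_beta := fun i => i.elim0
      disj := fun i j => j.elim0
      first := fun h => rfl }
  uniq sh := by
    apply ext'
    · funext j
      have := strictMono_fin_id (p := s) sh.α sh.mono_alpha j
      exact this.trans (by apply Fin.ext; rfl)
    · funext j
      exact j.elim0

/-- Extend a shuffle by appending the new top element at the end of `α`. -/
def extα {s t : ℕ} (hs : 1 ≤ s) (sh : Shuffle1 s t) : Shuffle1 (s + 1) t where
  α j :=
    if h : (j : ℕ) < s then ⟨(sh.α ⟨j, h⟩ : ℕ), by have := (sh.α ⟨j, h⟩).isLt; omega⟩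
    else ⟨s + t, by omega⟩
  β j := ⟨(sh.β j : ℕ), by have := (sh.β j).isLt; omega⟩
  mono_alpha := by
    intro i j hij
    have hij' : (i : ℕ) < (j : ℕ) := hij
    have hi' := i.isLt
    have hj' := j.isLt
    dsimp only
    split <;> split
    · rename_i hi hj
      exact Fin.mk_lt_mk.mpr (Fin.lt_def.mp
        (sh.mono_alpha (show (⟨(i : ℕ), hi⟩ : Fin s) < ⟨(j : ℕ), hj⟩ from
          Fin.mk_lt_mk.mpr hij')))
    · rename_i hi hj
      exact Fin.mk_lt_mk.mpr (by have := (sh.α ⟨(i : ℕ), hi⟩).isLt; omega)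
    · rename_i hi hj
      omega
    · rename_i hi hj
      omega
  mono_beta := by
    intro i j hij
    exact Fin.mk_lt_mk.mpr (Fin.lt_def.mp (sh.mono_beta hij))
  disj := by
    intro i j
    split
    · rename_i hi
      intro h
      exact sh.disj ⟨(i : ℕ), hi⟩ j (Fin.ext (Fin.mk_eq_mk.mp h))
    · intro h
      have h1 := (sh.β j).isLt
      have h2 := Fin.mk_eq_mk.mp h
      omega
  first := by
    intro _
    dsimp only
    split
    · rename_i h0
      apply Fin.ext
      simpa using congrArg Fin.val (sh.first h0)
    · rename_i h0
      omega

/-- Extend a shuffle by appending the new top element at the end of `β`. -/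
def extβ {s t : ℕ} (sh : Shuffle1 s t) : Shuffle1 s (t + 1) where
  α j := ⟨(sh.α j : ℕ), by have := (sh.α j).isLt; omega⟩
  β j :=
    if h : (j : ℕ) < t then ⟨(sh.β ⟨j, h⟩ : ℕ), by have := (sh.β ⟨j, h⟩).isLt; omega⟩
    else ⟨s + t, by omega⟩
  mono_alpha := by
    intro i j hij
    exact Fin.mk_lt_mk.mpr (Fin.lt_def.mp (sh.mono_alpha hij))
  mono_beta := by
    intro i j hij
    have hij' : (i : ℕ) < (j : ℕ) := hij
    have hi' := i.isLt
    have hj' := j.isLt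
    dsimp only
    split <;> split
    · rename_i hi hj
      exact Fin.mk_lt_mk.mpr (Fin.lt_def.mp
        (sh.mono_beta (show (⟨(i : ℕ), hi⟩ : Fin t) < ⟨(j : ℕ), hj⟩ from
          Fin.mk_lt_mk.mpr hij')))
    · rename_i hi hj
      exact Fin.mk_lt_mk.mpr (by have := (sh.β ⟨(i : ℕ), hi⟩).isLt; omega)
    · rename_i hi hj
      omega
    · rename_i hi hj
      omega
  disj := by
    intro i j
    split
    · rename_i hj
      intro h
      exact sh.disj i ⟨(j : ℕ), hj⟩ (Fin.ext (Fin.mk_eq_mk.mp h))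
    · intro h
      have h1 := (sh.α i).isLt
      have h2 := Fin.mk_eq_mk.mp h
      omega
  first := by
    intro hs
    apply Fin.ext
    simpa using congrArg Fin.val (sh.first hs)

lemma elim_surjective {s t : ℕ} (sh : Shuffle1 s t) :
    Function.Surjective (Sum.elim sh.α sh.β) := by
  have hinj : Function.Injective (Sum.elim sh.α sh.β) := by
    intro x y h
    cases x with
    | inl i =>
      cases y with
      | inl j =>
        simp only [Sum.elim_inl] at h
        exact congrArg Sum.inl (sh.mono_alpha.injective h)
      | inr j =>
        simp only [Sum.elim_inl, Sum.elim_inr] at h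
        exact absurd h (sh.disj i j)
    | inr i =>
      cases y with
      | inl j =>
        simp only [Sum.elim_inl, Sum.elim_inr] at h
        exact absurd h.symm (sh.disj j i)
      | inr j =>
        simp only [Sum.elim_inr] at h
        exact congrArg Sum.inr (sh.mono_beta.injective h)
  have hcard : Fintype.card (Fin s ⊕ Fin t) = Fintype.card (Fin (s + t)) := by simp
  exact ((Fintype.bijective_iff_injective_and_card _).mpr ⟨hinj, hcard⟩).2

lemma top_cases {s t : ℕ} (sh : Shuffle1 (s + 1) (t + 1)) :
    sh.α ⟨s, by omega⟩ = ⟨s + t + 1, by omega⟩ ∨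
      sh.β ⟨t, by omega⟩ = ⟨s + t + 1, by omega⟩ := by
  obtain ⟨x, hx⟩ := elim_surjective sh ⟨s + t + 1, by omega⟩
  cases x with
  | inl j =>
    left
    have h1 : sh.α j ≤ sh.α ⟨s, by omega⟩ := by
      apply sh.mono_alpha.monotone
      have := j.isLt
      simp only [Fin.le_def]
      omega
    simp only [Sum.elim_inl] at hx
    rw [hx] at h1
    have h2 := (sh.α ⟨s, by omega⟩).isLt
    have h3 := Fin.le_def.mp h1
    apply Fin.ext
    simp only [] at h3 ⊢
    omega
  | inr j =>
    right
    have h1 : sh.β j ≤ sh.β ⟨t, by omega⟩ := by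
      apply sh.mono_beta.monotone
      have := j.isLt
      simp only [Fin.le_def]
      omega
    simp only [Sum.elim_inr] at hx
    rw [hx] at h1
    have h2 := (sh.β ⟨t, by omega⟩).isLt
    have h3 := Fin.le_def.mp h1
    apply Fin.ext
    simp only [] at h3 ⊢
    omega

lemma exists_extα {s t : ℕ} (hs : 1 ≤ s) (sh : Shuffle1 (s + 1) t)
    (hlast : sh.α ⟨s, by omega⟩ = ⟨s + t, by omega⟩) :
    ∃ r : Shuffle1 s t, extα hs r = sh := by
  have hub : ∀ i : Fin s, ((sh.α ⟨(i : ℕ), by omega⟩ : Fin (s + 1 + t)) : ℕ) < s + t := by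
    intro i
    have h1 : sh.α ⟨(i : ℕ), by omega⟩ < sh.α ⟨s, by omega⟩ := by
      apply sh.mono_alpha
      have := i.isLt
      simp only [Fin.lt_def]
      omega
    rw [hlast] at h1
    simpa [Fin.lt_def] using h1
  have hubβ : ∀ j : Fin t, ((sh.β j : Fin (s + 1 + t)) : ℕ) < s + t := by
    intro j
    have h1 : sh.α ⟨s, by omega⟩ ≠ sh.β j := sh.disj _ _
    rw [hlast] at h1
    have h2 := (sh.β j).isLt
    have h3 : ((sh.β j) : ℕ) ≠ s + t := by
      intro hc
      exact h1 (Fin.ext (by simp only [Fin.val_last]; omega))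
    omega
  refine ⟨{ α := fun i => ⟨(sh.α ⟨(i : ℕ), by omega⟩ : ℕ), hub i⟩
            β := fun j => ⟨(sh.β j : ℕ), hubβ j⟩
            mono_alpha := ?_
            mono_beta := ?_
            disj := ?_
            first := ?_ }, ?_⟩
  · intro i j hij
    have hij' : (i : ℕ) < (j : ℕ) := hij
    exact Fin.mk_lt_mk.mpr (Fin.lt_def.mp (sh.mono_alpha
      (show (⟨(i : ℕ), by omega⟩ : Fin (s + 1)) < ⟨(j : ℕ), by omega⟩ from
        Fin.mk_lt_mk.mpr hij')))
  · intro i j hij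
    exact Fin.mk_lt_mk.mpr (Fin.lt_def.mp (sh.mono_beta hij))
  · intro i j h
    exact sh.disj ⟨(i : ℕ), by omega⟩ j (Fin.ext (Fin.mk_eq_mk.mp h))
  · intro h0
    dsimp only
    exact Fin.mk_eq_mk.mpr (by simpa using congrArg Fin.val (sh.first (by omega)))
  · apply ext'
    · funext j
      simp only [extα]
      split
      · rename_i hj
        apply Fin.ext
        rfl
      · rename_i hj
        have hjs : (j : ℕ) = s := by have := j.isLt; omega
        have hje : j = ⟨s, by omega⟩ := Fin.ext hjs
        rw [hje, hlast]
    · funext j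
      apply Fin.ext
      rfl

lemma exists_extβ {s t : ℕ} (sh : Shuffle1 s (t + 1))
    (hlast : sh.β ⟨t, by omega⟩ = ⟨s + t, by omega⟩) :
    ∃ r : Shuffle1 s t, extβ r = sh := by
  have hub : ∀ i : Fin t, ((sh.β ⟨(i : ℕ), by omega⟩ : Fin (s + (t + 1))) : ℕ) < s + t := by
    intro i
    have h1 : sh.β ⟨(i : ℕ), by omega⟩ < sh.β ⟨t, by omega⟩ := by
      apply sh.mono_beta
      have := i.isLt
      simp only [Fin.lt_def]
      omega
    rw [hlast] at h1
    simpa [Fin.lt_def] using h1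
  have hubα : ∀ j : Fin s, ((sh.α j : Fin (s + (t + 1))) : ℕ) < s + t := by
    intro j
    have h1 : sh.α j ≠ sh.β ⟨t, by omega⟩ := sh.disj _ _
    rw [hlast] at h1
    have h2 := (sh.α j).isLt
    have h3 : ((sh.α j) : ℕ) ≠ s + t := by
      intro hc
      exact h1 (Fin.ext (by simp only [Fin.val_last]; omega))
    omega
  refine ⟨{ α := fun j => ⟨(sh.α j : ℕ), hubα j⟩
            β := fun i => ⟨(sh.β ⟨(i : ℕ), by omega⟩ : ℕ), hub i⟩
            mono_alpha := ?_
            mono_beta := ?_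
            disj := ?_
            first := ?_ }, ?_⟩
  · intro i j hij
    exact Fin.mk_lt_mk.mpr (Fin.lt_def.mp (sh.mono_alpha hij))
  · intro i j hij
    have hij' : (i : ℕ) < (j : ℕ) := hij
    exact Fin.mk_lt_mk.mpr (Fin.lt_def.mp (sh.mono_beta
      (show (⟨(i : ℕ), by omega⟩ : Fin (t + 1)) < ⟨(j : ℕ), by omega⟩ from
        Fin.mk_lt_mk.mpr hij')))
  · intro i j h
    exact sh.disj i ⟨(j : ℕ), by omega⟩ (Fin.ext (Fin.mk_eq_mk.mp h))
  · intro h0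
    exact Fin.mk_eq_mk.mpr (by simpa using congrArg Fin.val (sh.first h0))
  · apply ext'
    · funext j
      apply Fin.ext
      rfl
    · funext j
      simp only [extβ]
      split
      · rename_i hj
        apply Fin.ext
        rfl
      · rename_i hj
        have hjs : (j : ℕ) = t := by have := j.isLt; omega
        have hje : j = ⟨t, by omega⟩ := Fin.ext hjs
        rw [hje, hlast]

lemma extα_injective {s t : ℕ} (hs : 1 ≤ s) :
    Function.Injective (extα (s := s) (t := t) hs) := by
  intro x y h
  have hA := congrArg Shuffle1.α h
  have hB := congrArg Shuffle1.β h
  apply ext'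
  · funext j
    have h1 := congrFun hA ⟨(j : ℕ), by omega⟩
    have hj : ((⟨(j : ℕ), by omega⟩ : Fin (s + 1)) : ℕ) < s := j.isLt
    simp only [extα, dif_pos hj] at h1
    have hv := congrArg Fin.val h1
    simp only [] at hv
    apply Fin.ext
    have hx : (⟨(j : ℕ), hj⟩ : Fin s) = j := Fin.ext rfl
    rw [hx] at hv
    exact hv
  · funext j
    have h1 := congrFun hB j
    have hv := congrArg Fin.val h1
    simp only [extα] at hv
    exact Fin.ext hv

lemma extβ_injective {s t : ℕ} :
    Function.Injective (extβ (s := s) (t := t)) := by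
  intro x y h
  have hA := congrArg Shuffle1.α h
  have hB := congrArg Shuffle1.β h
  apply ext'
  · funext j
    have h1 := congrFun hA j
    have hv := congrArg Fin.val h1
    simp only [extβ] at hv
    exact Fin.ext hv
  · funext j
    have h1 := congrFun hB ⟨(j : ℕ), by omega⟩
    have hj : ((⟨(j : ℕ), by omega⟩ : Fin (t + 1)) : ℕ) < t := j.isLt
    simp only [extβ, dif_pos hj] at h1
    have hv := congrArg Fin.val h1
    simp only [] at hv
    apply Fin.ext
    have hx : (⟨(j : ℕ), hj⟩ : Fin t) = j := Fin.ext rfl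
    rw [hx] at hv
    exact hv

lemma sum_split {M : Type*} [AddCommMonoid M] {s t : ℕ} (hs : 1 ≤ s)
    (f : Shuffle1 (s + 1) (t + 1) → M) :
    ∑ sh : Shuffle1 (s + 1) (t + 1), f sh =
      (∑ sh : Shuffle1 s (t + 1), f (extα hs sh)) +
        ∑ sh : Shuffle1 (s + 1) t, f (extβ sh) := by
  have hbij : Function.Bijective
      (Sum.elim (extα (t := t + 1) hs) (extβ (s := s + 1) (t := t))) := by
    constructor
    · intro x y h
      cases x with
      | inl x1 =>
        cases y with
        | inl y1 =>
          simp only [Sum.elim_inl] at h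
          exact congrArg Sum.inl (extα_injective hs h)
        | inr y1 =>
          simp only [Sum.elim_inl, Sum.elim_inr] at h
          exfalso
          have h1 := congrFun (congrArg Shuffle1.α h) ⟨s, by omega⟩
          have hns : ¬ ((⟨s, by omega⟩ : Fin (s + 1)) : ℕ) < s := lt_irrefl s
          simp only [extα, extβ, dif_neg hns] at h1
          have hv := congrArg Fin.val h1
          simp only [] at hv
          have := (y1.α ⟨s, by omega⟩).isLt
          omega
      | inr x1 =>
        cases y with
        | inl y1 =>
          simp only [Sum.elim_inl, Sum.elim_inr] at h
          exfalso
          have h1 := congrFun (congrArg Shuffle1.α h) ⟨s, by omega⟩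
          have hns : ¬ ((⟨s, by omega⟩ : Fin (s + 1)) : ℕ) < s := lt_irrefl s
          simp only [extα, extβ, dif_neg hns] at h1
          have hv := congrArg Fin.val h1
          simp only [] at hv
          have := (x1.α ⟨s, by omega⟩).isLt
          omega
        | inr y1 =>
          simp only [Sum.elim_inr] at h
          exact congrArg Sum.inr (extβ_injective h)
    · intro sh
      rcases top_cases sh with hc | hc
      · obtain ⟨r, hr⟩ := exists_extα hs sh (hc.trans (Fin.mk_eq_mk.mpr (by omega)))
        exact ⟨Sum.inl r, hr⟩
      · obtain ⟨r, hr⟩ := exists_extβ sh (hc.trans (Fin.mk_eq_mk.mpr (by omega)))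
        exact ⟨Sum.inr r, hr⟩
  calc ∑ sh : Shuffle1 (s + 1) (t + 1), f sh
      = ∑ x : Shuffle1 s (t + 1) ⊕ Shuffle1 (s + 1) t,
          f (Sum.elim (extα hs) extβ x) :=
        (Fintype.sum_bijective _ hbij _ _ (fun x => rfl)).symm
    _ = _ := by rw [Fintype.sum_sum_type]; rfl

lemma sum_split1 {M : Type*} [AddCommMonoid M] {t : ℕ} (f : Shuffle1 1 (t + 1) → M) :
    ∑ sh : Shuffle1 1 (t + 1), f sh = ∑ sh : Shuffle1 1 t, f (extβ sh) := by
  have hbij : Function.Bijective (extβ (s := 1) (t := t)) := by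
    constructor
    · exact extβ_injective
    · intro sh
      rcases top_cases (s := 0) sh with hc | hc
      · exfalso
        have h0 := sh.first (by omega)
        have hv := congrArg Fin.val (h0.symm.trans hc)
        simp at hv
      · exact exists_extβ sh (hc.trans (Fin.mk_eq_mk.mpr (by omega)))
  exact (Fintype.sum_bijective _ hbij _ _ (fun x => rfl)).symm

end ShuffleAux

open ShuffleAux

section WordLemmas

variable {L : Type*} [LieRing L]

lemma lieWord_cons_cons (x y : L) (l : List L) :
    lieWord (x :: y :: l) = lieWord (⁅x, y⁆ :: l) := rfl

lemma lieWord_snoc (x : L) (l : List L) (y : L) :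
    lieWord (x :: (l ++ [y])) = ⁅lieWord (x :: l), y⁆ := by
  simp [lieWord, List.foldl_append]

lemma zsmul_lie' (z : ℤ) (x y : L) : ⁅z • x, y⁆ = z • ⁅x, y⁆ :=
  map_zsmul (AddMonoidHom.mk' (fun w => ⁅w, y⁆) (fun u v => add_lie u v y)) z x

lemma sum_lie' {ι : Type*} [Fintype ι] (f : ι → L) (y : L) :
    ⁅∑ i, f i, y⁆ = ∑ i, ⁅f i, y⁆ :=
  map_sum (AddMonoidHom.mk' (fun w => ⁅w, y⁆) (fun u v => add_lie u v y)) f Finset.univ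

/-- The word `[a, a_{β(t)}, …, a_{β(1)}, a_{α(1)}, …, a_{α(s)}]` attached to a shuffle. -/
def shWord {s t : ℕ} (a : L) (b : Fin (s + t) → L) (sh : Shuffle1 s t) : L :=
  lieWord (a :: ((List.ofFn fun j => b (sh.β j)).reverse ++ List.ofFn fun j => b (sh.α j)))

lemma shWord_extα {s t : ℕ} (hs : 1 ≤ s) (a : L) (b : Fin (s + 1 + t) → L)
    (sh : Shuffle1 s t) :
    shWord a b (extα hs sh) =
      ⁅shWord a (fun x : Fin (s + t) => b ⟨(x : ℕ), by omega⟩) sh, b ⟨s + t, by omega⟩⁆ := by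
  have hβ : (List.ofFn fun j => b ((extα hs sh).β j)) =
      List.ofFn fun j => b ⟨((sh.β j : ℕ)), by have := (sh.β j).isLt; omega⟩ := rfl
  have hα : (List.ofFn fun j => b ((extα hs sh).α j)) =
      (List.ofFn fun j : Fin s => b ⟨((sh.α j : ℕ)), by have := (sh.α j).isLt; omega⟩)
        ++ [b ⟨s + t, by omega⟩] := by
    rw [List.ofFn_succ', List.concat_eq_append]
    congr 1
    · apply congrArg List.ofFn
      funext j
      have hj : ((j.castSucc : Fin (s + 1)) : ℕ) < s := j.isLt
      simp only [extα, dif_pos hj]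
      apply congrArg b
      apply Fin.ext
      rfl
    · have hns : ¬ ((Fin.last s : Fin (s + 1)) : ℕ) < s := lt_irrefl s
      simp only [extα, dif_neg hns]
  rw [shWord, hβ, hα, ← List.append_assoc, lieWord_snoc]
  rfl

lemma shWord_extβ {s t : ℕ} (a : L) (b : Fin (s + (t + 1)) → L) (sh : Shuffle1 s t) :
    shWord a b (extβ sh) =
      shWord ⁅a, b ⟨s + t, by omega⟩⁆ (fun x : Fin (s + t) => b ⟨(x : ℕ), by omega⟩) sh := by
  have hα : (List.ofFn fun j => b ((extβ sh).α j)) =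
      List.ofFn fun j => b ⟨((sh.α j : ℕ)), by have := (sh.α j).isLt; omega⟩ := rfl
  have hβ : (List.ofFn fun j => b ((extβ sh).β j)) =
      (List.ofFn fun j : Fin t => b ⟨((sh.β j : ℕ)), by have := (sh.β j).isLt; omega⟩)
        ++ [b ⟨s + t, by omega⟩] := by
    rw [List.ofFn_succ', List.concat_eq_append]
    congr 1
    · apply congrArg List.ofFn
      funext j
      have hj : ((j.castSucc : Fin (t + 1)) : ℕ) < t := j.isLt
      simp only [extβ, dif_pos hj]
      apply congrArg b
      apply Fin.ext
      rfl
    · have hns : ¬ ((Fin.last t : Fin (t + 1)) : ℕ) < t := lt_irrefl t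
      simp only [extβ, dif_neg hns]
  rw [shWord, hα, hβ, List.reverse_append]
  simp only [List.reverse_singleton, List.singleton_append, List.cons_append]
  rw [lieWord_cons_cons]
  rfl

lemma shWord_extα' {s t : ℕ} (hs : 1 ≤ s) (a : L) (b : Fin (s + 1 + t) → L)
    (sh : Shuffle1 s t) (b₁ : Fin (s + t) → L) (c : L)
    (hb₁ : ∀ x : Fin (s + t), b ⟨(x : ℕ), by omega⟩ = b₁ x)
    (hc : b ⟨s + t, by omega⟩ = c) :
    shWord a b (extα hs sh) = ⁅shWord a b₁ sh, c⁆ := by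
  rw [shWord_extα hs]
  exact congrArg₂ (fun u v => ⁅u, v⁆)
    (congrArg (fun f => shWord a f sh) (funext hb₁)) hc

lemma shWord_extβ' {s t : ℕ} (a : L) (b : Fin (s + (t + 1)) → L)
    (sh : Shuffle1 s t) (b₁ : Fin (s + t) → L) (c : L)
    (hb₁ : ∀ x : Fin (s + t), b ⟨(x : ℕ), by omega⟩ = b₁ x)
    (hc : b ⟨s + t, by omega⟩ = c) :
    shWord a b (extβ sh) = shWord ⁅a, c⁆ b₁ sh := by
  rw [shWord_extβ]
  exact congrArg₂ (fun u f => shWord u f sh)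
    (congrArg (fun v => ⁅a, v⁆) hc) (funext hb₁)

/-- The `t`-th row of the shuffle sum. -/
noncomputable def rowS (a : L) {m : ℕ} (b : Fin m → L) (s t : ℕ) (h : s + t = m) : L :=
  ∑ sh : Shuffle1 s t,
    ((-1 : ℤ) ^ t) • shWord a (fun x => b (Fin.cast h x)) sh

lemma rowS_congr (a : L) {m : ℕ} (b : Fin m → L) {s s' t : ℕ} (hss : s = s')
    (h : s + t = m) (h' : s' + t = m) : rowS a b s t h = rowS a b s' t h' := by
  subst hss; rfl

lemma rowS_zero (a : L) {m : ℕ} (b : Fin m → L) (h : m + 0 = m) :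
    rowS a b m 0 h = lieWord (a :: List.ofFn b) := by
  rw [rowS, Fintype.sum_unique]
  have hfn : (List.ofFn fun j : Fin m =>
      (fun x => b (Fin.cast h x)) ((default : Shuffle1 m 0).α j)) = List.ofFn b := by
    apply congrArg List.ofFn
    funext j
    apply congrArg b
    apply Fin.ext
    rfl
  show (-1 : ℤ) ^ 0 • lieWord (a :: ((List.ofFn fun j : Fin 0 =>
    (fun x => b (Fin.cast h x)) ((default : Shuffle1 m 0).β j)).reverse ++ _)) = _
  rw [pow_zero, one_smul, List.ofFn_zero, List.reverse_nil, List.nil_append, hfn]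

end WordLemmas

section Rows

variable {L : Type*} [LieRing L]

lemma rowS_mid {m : ℕ} (a : L) (b : Fin (m + 1) → L) (s t : ℕ) (hs : 1 ≤ s)
    (h : s + 1 + (t + 1) = m + 1) (h₁ : s + (t + 1) = m) (h₂ : s + 1 + t = m) :
    rowS a b (s + 1) (t + 1) h =
      ⁅rowS a (fun j => b j.castSucc) s (t + 1) h₁, b (Fin.last m)⁆ -
        rowS ⁅a, b (Fin.last m)⁆ (fun j => b j.castSucc) (s + 1) t h₂ := by
  rw [rowS, sum_split hs, sub_eq_add_neg]
  congr 1
  · rw [rowS, sum_lie']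
    refine Finset.sum_congr rfl fun sh _ => ?_
    rw [zsmul_lie']
    refine congrArg (((-1 : ℤ) ^ (t + 1)) • ·) ?_
    exact shWord_extα' hs a _ sh _ _
      (fun x => congrArg b (Fin.ext rfl)) (congrArg b (Fin.ext h₁))
  · rw [rowS, ← Finset.sum_neg_distrib]
    refine Finset.sum_congr rfl fun sh _ => ?_
    rw [shWord_extβ' _ _ sh (fun x => b ((Fin.cast h₂ x).castSucc)) (b (Fin.last m))
      (fun x => congrArg b (Fin.ext rfl)) (congrArg b (Fin.ext h₂))]
    rw [pow_succ, mul_smul]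
    simp

lemma rowS_top {m : ℕ} (a : L) (b : Fin (m + 1) → L) (t : ℕ)
    (h : 1 + (t + 1) = m + 1) (h₂ : 1 + t = m) :
    rowS a b 1 (t + 1) h =
      - rowS ⁅a, b (Fin.last m)⁆ (fun j => b j.castSucc) 1 t h₂ := by
  rw [rowS, sum_split1, rowS, ← Finset.sum_neg_distrib]
  refine Finset.sum_congr rfl fun sh _ => ?_
  rw [shWord_extβ' _ _ sh (fun x => b ((Fin.cast h₂ x).castSucc)) (b (Fin.last m))
    (fun x => congrArg b (Fin.ext rfl)) (congrArg b (Fin.ext h₂))]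
  rw [pow_succ, mul_smul]
  simp

lemma rowS_zero' {m : ℕ} (a : L) (b : Fin (m + 1) → L)
    (h : m + 1 + 0 = m + 1) (h' : m + 0 = m) :
    rowS a b (m + 1) 0 h =
      ⁅rowS a (fun j => b j.castSucc) m 0 h', b (Fin.last m)⁆ := by
  rw [rowS_zero, rowS_zero]
  rw [List.ofFn_succ' b, List.concat_eq_append,
    show (a :: ((List.ofFn fun j : Fin m => b j.castSucc) ++ [b (Fin.last m)]))
      = a :: ((List.ofFn fun j : Fin m => b j.castSucc) ++ [b (Fin.last m)]) from rfl,
    lieWord_snoc]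

end Rows

section Main

variable {L : Type*} [LieRing L]

lemma lieWord_ofFn_succ {n : ℕ} (hn : 1 ≤ n) (b : Fin (n + 1) → L) :
    lieWord (List.ofFn b) =
      ⁅lieWord (List.ofFn fun j : Fin n => b j.castSucc), b (Fin.last n)⁆ := by
  rw [List.ofFn_succ' b, List.concat_eq_append]
  obtain ⟨x, l, hl⟩ : ∃ x l, (List.ofFn fun j : Fin n => b j.castSucc) = x :: l := by
    rcases n with _ | n
    · omega
    · exact ⟨b 0, _, List.ofFn_succ⟩
  rw [hl, List.cons_append]
  exact lieWord_snoc x l (b (Fin.last n))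

theorem key_lemma : ∀ n, 1 ≤ n → ∀ (a : L) (b : Fin n → L),
    ⁅a, lieWord (List.ofFn b)⁆ =
      ∑ i : Fin n, rowS a b (n - (i : ℕ)) (i : ℕ) (Nat.sub_add_cancel i.isLt.le) := by
  intro n hn
  induction n, hn using Nat.le_induction with
  | base =>
    intro a b
    rw [Fin.sum_univ_one]
    rw [show rowS a b (1 - ((0 : Fin 1) : ℕ)) ((0 : Fin 1) : ℕ)
          (Nat.sub_add_cancel (0 : Fin 1).isLt.le)
        = rowS a b 1 0 (Nat.sub_add_cancel (0 : Fin 1).isLt.le) from rfl]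
    rw [rowS_zero]
    rw [List.ofFn_succ, List.ofFn_zero]
    rfl
  | succ n hn IH =>
    intro a b
    have hsk : -⁅lieWord (List.ofFn fun j : Fin n => b j.castSucc), ⁅a, b (Fin.last n)⁆⁆ =
        ⁅⁅a, b (Fin.last n)⁆, lieWord (List.ofFn fun j : Fin n => b j.castSucc)⁆ :=
      lie_skew _ _
    have hstep : ⁅a, lieWord (List.ofFn b)⁆ =
        ⁅⁅a, lieWord (List.ofFn fun j : Fin n => b j.castSucc)⁆, b (Fin.last n)⁆ -
          ⁅⁅a, b (Fin.last n)⁆, lieWord (List.ofFn fun j : Fin n => b j.castSucc)⁆ := by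
      rw [lieWord_ofFn_succ hn b, leibniz_lie, sub_eq_add_neg, ← hsk, neg_neg]
    rw [hstep, IH a (fun j => b j.castSucc), IH ⁅a, b (Fin.last n)⁆ (fun j => b j.castSucc)]
    set b' : Fin n → L := fun j => b j.castSucc with hb'
    set c : L := b (Fin.last n) with hc
    -- row-by-row identity
    have hrow : ∀ k, k ≤ n → ∀ pf : n + 1 - k + k = n + 1,
        rowS a b (n + 1 - k) k pf =
          (if h : k < n then
              ⁅rowS a b' (n - k) k (Nat.sub_add_cancel h.le), c⁆
            else 0) +
          (if h : 1 ≤ k then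
              -(rowS ⁅a, c⁆ b' (n - (k - 1)) (k - 1)
                  (Nat.sub_add_cancel (by omega)))
            else 0) := by
      intro k hk pf
      match k, hk with
      | 0, _ =>
        rw [dif_pos (show 0 < n from hn), dif_neg (by omega), add_zero]
        rw [rowS_congr a b (show n + 1 - 0 = n + 1 by omega) pf (by omega)]
        rw [rowS_congr a b' (show n - 0 = n by omega) _ (by omega)]
        exact rowS_zero' a b (by omega) (by omega)
      | (t + 1), hk =>
        by_cases htn : t + 1 < n
        · -- middle row
          have hs1 : 1 ≤ n - (t + 1) := by omega
          rw [dif_pos htn, dif_pos (by omega : 1 ≤ t + 1)]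
          rw [rowS_congr a b (show n + 1 - (t + 1) = (n - (t + 1)) + 1 by omega) pf (by omega)]
          rw [rowS_mid a b (n - (t + 1)) t hs1 (by omega) (Nat.sub_add_cancel htn.le)
            (show (n - (t + 1)) + 1 + t = n by omega)]
          rw [sub_eq_add_neg]
          congr 2
          exact rowS_congr ⁅a, c⁆ b' (by omega) _ _
        · -- top row: t + 1 = n
          rw [dif_neg htn, dif_pos (by omega : 1 ≤ t + 1), zero_add]
          rw [rowS_congr a b (show n + 1 - (t + 1) = 1 by omega) pf (by omega)]
          rw [rowS_top a b t (by omega) (show 1 + t = n by omega)]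
          congr 1
          exact rowS_congr ⁅a, c⁆ b' (by omega) _ _
    have hsplit : ∑ i : Fin (n + 1), rowS a b (n + 1 - (i : ℕ)) (i : ℕ)
          (Nat.sub_add_cancel i.isLt.le) =
        (∑ i : Fin (n + 1), if h : (i : ℕ) < n then
            ⁅rowS a b' (n - (i : ℕ)) (i : ℕ) (Nat.sub_add_cancel h.le), c⁆ else 0) +
        (∑ i : Fin (n + 1), if h : 1 ≤ (i : ℕ) then
            -(rowS ⁅a, c⁆ b' (n - ((i : ℕ) - 1)) ((i : ℕ) - 1)
                (Nat.sub_add_cancel (by omega))) else 0) := by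
      rw [← Finset.sum_add_distrib]
      exact Finset.sum_congr rfl fun i _ => hrow (i : ℕ) (by omega) _
    rw [hsplit]
    have hA : (∑ i : Fin (n + 1), if h : (i : ℕ) < n then
          ⁅rowS a b' (n - (i : ℕ)) (i : ℕ) (Nat.sub_add_cancel h.le), c⁆ else 0) =
        ∑ i : Fin n, ⁅rowS a b' (n - (i : ℕ)) (i : ℕ) (Nat.sub_add_cancel i.isLt.le), c⁆ := by
      rw [Fin.sum_univ_castSucc]
      have hlast : ¬ ((Fin.last n : Fin (n + 1)) : ℕ) < n := by simp
      rw [dif_neg hlast, add_zero]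
      refine Finset.sum_congr rfl fun i _ => ?_
      have hi : ((i.castSucc : Fin (n + 1)) : ℕ) < n := i.isLt
      rw [dif_pos hi]
      simp only [Fin.coe_castSucc]
    have hB : (∑ i : Fin (n + 1), if h : 1 ≤ (i : ℕ) then
          -(rowS ⁅a, c⁆ b' (n - ((i : ℕ) - 1)) ((i : ℕ) - 1)
              (Nat.sub_add_cancel (by omega))) else 0) =
        -∑ i : Fin n, rowS ⁅a, c⁆ b' (n - (i : ℕ)) (i : ℕ) (Nat.sub_add_cancel i.isLt.le) := by
      rw [Fin.sum_univ_succ]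
      have h0 : ¬ (1 ≤ ((0 : Fin (n + 1)) : ℕ)) := by simp
      rw [dif_neg h0, zero_add, ← Finset.sum_neg_distrib]
      refine Finset.sum_congr rfl fun i _ => ?_
      have hi : 1 ≤ ((i.succ : Fin (n + 1)) : ℕ) := by simp
      rw [dif_pos hi]
      simp only [Fin.val_succ, Nat.add_sub_cancel]
    rw [hA, hB, sum_lie', sub_eq_add_neg]

end Main

/-- For elements `a, a₁,…,aₙ` of a Lie ring,
`[a,[a₁,…,aₙ]] = ∑_{i=0}^{n-1} ∑_{(α,β) ∈ Sh¹(n−i,i)} (−1)^i · [a, a_{β(i)},…,a_{β(1)}, a_{α(1)},…,a_{α(n−i)}]`,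
where the brackets on the right-hand side are left-normed. -/
theorem lie_leftBracket_eq_sum_shuffles {L : Type*} [LieRing L] (n : ℕ) (hn : 1 ≤ n)
    (a : L) (b : Fin n → L) :
    ⁅a, lieWord (List.ofFn b)⁆ =
      ∑ i : Fin n, ∑ᶠ sh : Shuffle1 (n - (i : ℕ)) (i : ℕ),
        ((-1 : ℤ) ^ (i : ℕ)) •
          lieWord (a ::
            ((List.ofFn fun j => b (Fin.cast (Nat.sub_add_cancel i.isLt.le) (sh.β j))).reverse
              ++ List.ofFn fun j => b (Fin.cast (Nat.sub_add_cancel i.isLt.le) (sh.α j)))) := by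
  rw [key_lemma n hn a b]
  apply Finset.sum_congr rfl
  intro i _
  rw [finsum_eq_sum_of_fintype]
  rfl
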